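/- Fix a ≥ 0 and b ≥ 0. There exists q ≥ 0 such that for all sufficiently large n and all real z with z ≥ -√n/(2b), Q(z - a/√n) - Q(z + (b/√n) z²) ≤ q/√n, where Q is the standard Gaussian complementary cdf. In particular one may take q = max{(3b e^{-1} + a)/√(2π), (a/√(2π))(1 + ab/n), (8b e^{-1} + a)/√(2π)}. -/

import Mathlib

open MeasureTheory Set Real

noncomputable def gaussQ (x : ℝ) : ℝ :=
  ∫ t in Set.Ioi x, Real.exp (-t ^ 2 / 2) / Real.sqrt (2 * Real.pi)

lemma gauss_integrable : Integrable (fun t : ℝ => Real.exp (-t ^ 2 / 2) / Real.sqrt (2 * Real.pi)) := by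
  have h := integrable_exp_neg_mul_sq (by norm_num : (0:ℝ) < 1/2)
  have : (fun t : ℝ => Real.exp (-t ^ 2 / 2) / Real.sqrt (2 * Real.pi))
      = fun t : ℝ => Real.exp (-(1/2) * t ^ 2) / Real.sqrt (2 * Real.pi) := by
    funext t; ring_nf
  rw [this]
  exact h.div_const _

lemma gaussQ_sub (x y : ℝ) (hxy : x ≤ y) :
    gaussQ x - gaussQ y
      = ∫ t in Set.Ioc x y, Real.exp (-t ^ 2 / 2) / Real.sqrt (2 * Real.pi) := by
  have h1 : Set.Ioc x y ∪ Set.Ioi y = Set.Ioi x := Set.Ioc_union_Ioi_eq_Ioi hxy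
  have h2 : Disjoint (Set.Ioc x y) (Set.Ioi y) := by
    simp [Set.disjoint_left]
  have := MeasureTheory.setIntegral_union h2 measurableSet_Ioi
    (gauss_integrable.integrableOn (s := Set.Ioc x y))
    (gauss_integrable.integrableOn (s := Set.Ioi y))
  unfold gaussQ
  rw [← h1, this]
  ring

lemma integral_bound (x y M : ℝ) (hxy : x ≤ y)
    (h : ∀ t ∈ Set.Ioc x y, Real.exp (-t ^ 2 / 2) ≤ M) :
    (∫ t in Set.Ioc x y, Real.exp (-t ^ 2 / 2) / Real.sqrt (2 * Real.pi)) ≤ (y - x) * M := by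
  have hle : (∫ t in Set.Ioc x y, Real.exp (-t ^ 2 / 2) / Real.sqrt (2 * Real.pi))
      ≤ ∫ _t in Set.Ioc x y, M := by
    apply MeasureTheory.setIntegral_mono_on
      (gauss_integrable.integrableOn) (integrableOn_const measure_Ioc_lt_top.ne)
      measurableSet_Ioc
    intro t ht
    have hs : (1:ℝ) ≤ Real.sqrt (2 * Real.pi) := by
      rw [show (1:ℝ) = Real.sqrt 1 by simp]
      exact Real.sqrt_le_sqrt (by nlinarith [Real.pi_gt_three])
    calc Real.exp (-t ^ 2 / 2) / Real.sqrt (2 * Real.pi)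
        ≤ Real.exp (-t ^ 2 / 2) / 1 :=
          div_le_div_of_nonneg_left (Real.exp_pos _).le one_pos hs
      _ = Real.exp (-t ^ 2 / 2) := div_one _
      _ ≤ M := h t ht
  calc (∫ t in Set.Ioc x y, Real.exp (-t ^ 2 / 2) / Real.sqrt (2 * Real.pi))
      ≤ ∫ _t in Set.Ioc x y, M := hle
    _ = (y - x) * M := by
        rw [MeasureTheory.setIntegral_const, Real.volume_real_Ioc_of_le hxy,
          smul_eq_mul]

lemma key_exp (c : ℝ) : c * Real.exp (-c) ≤ 1 := by
  rcases le_or_gt c 0 with h | h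
  · have := Real.exp_pos (-c); nlinarith
  · have h1 : c ≤ Real.exp c := (Real.add_one_le_exp c).trans' (by linarith)
    have h2 : Real.exp c * Real.exp (-c) = 1 := by
      rw [← Real.exp_add]; simp
    have := Real.exp_pos (-c); nlinarith

set_option maxHeartbeats 2000000 in
theorem stmt7 (a b : ℝ) (ha : 0 ≤ a) (hb : 0 ≤ b) :
    ∃ q : ℝ, 0 ≤ q ∧ ∃ N : ℕ, ∀ n : ℕ, N ≤ n → ∀ z : ℝ,
      -(Real.sqrt n) / (2 * b) ≤ z →
      gaussQ (z - a / Real.sqrt n) - gaussQ (z + (b / Real.sqrt n) * z ^ 2)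
        ≤ q / Real.sqrt n := by
  refine ⟨a + 8 * b, by linarith, ⌈a ^ 2⌉₊ + 1, ?_⟩
  intro n hn z hz
  set s := Real.sqrt n with hs_def
  have hna : a ^ 2 ≤ (n : ℝ) := by
    calc a ^ 2 ≤ (⌈a ^ 2⌉₊ : ℝ) := Nat.le_ceil _
      _ ≤ (n : ℝ) := by exact_mod_cast Nat.le_of_succ_le hn
  have hn1 : (1 : ℝ) ≤ (n : ℝ) := by
    have : 1 ≤ n := le_trans (Nat.le_add_left 1 _) hn
    exact_mod_cast this
  have hs1 : (1 : ℝ) ≤ s := Real.one_le_sqrt.mpr hn1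
  have hs0 : (0 : ℝ) < s := lt_of_lt_of_le one_pos hs1
  have has : a ≤ s := by
    calc a = Real.sqrt (a ^ 2) := by rw [Real.sqrt_sq ha]
      _ ≤ s := Real.sqrt_le_sqrt hna
  set x := z - a / s with hx_def
  set y := z + (b / s) * z ^ 2 with hy_def
  have hxy : x ≤ y := by
    have h1 : 0 ≤ a / s := div_nonneg ha hs0.le
    have h2 : 0 ≤ (b / s) * z ^ 2 := mul_nonneg (div_nonneg hb hs0.le) (sq_nonneg z)
    simp only [hx_def, hy_def]; linarith
  rw [gaussQ_sub x y hxy]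
  have hyx : y - x = a / s + (b / s) * z ^ 2 := by simp only [hx_def, hy_def]; ring
  rcases le_or_gt 1 z with hz1 | hz1
  · -- z ≥ 1
    have hbound : ∀ t ∈ Set.Ioc x y, Real.exp (-t ^ 2 / 2) ≤ Real.exp (-(z - 1) ^ 2 / 2) := by
      intro t ht
      have ht1 : z - 1 ≤ t := by
        have : a / s ≤ 1 := (div_le_one hs0).mpr has
        have := ht.1
        simp only [hx_def] at this
        linarith
      have h0 : 0 ≤ z - 1 := by linarith
      have : (z - 1) ^ 2 ≤ t ^ 2 := by nlinarith
      apply Real.exp_le_exp.mpr; linarith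
    calc (∫ t in Set.Ioc x y, Real.exp (-t ^ 2 / 2) / Real.sqrt (2 * Real.pi))
        ≤ (y - x) * Real.exp (-(z - 1) ^ 2 / 2) := integral_bound x y _ hxy hbound
      _ ≤ (a + 8 * b) / s := by
          rw [hyx, add_mul]
          have he1 : Real.exp (-(z - 1) ^ 2 / 2) ≤ 1 := by
            apply Real.exp_le_one_iff.mpr; nlinarith
          have he0 : 0 < Real.exp (-(z - 1) ^ 2 / 2) := Real.exp_pos _
          have hk : (z - 1) ^ 2 / 2 * Real.exp (-((z - 1) ^ 2 / 2)) ≤ 1 := key_exp _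
          have hz2 : z ^ 2 * Real.exp (-(z - 1) ^ 2 / 2) ≤ 6 := by
            have hexpr : -(z - 1) ^ 2 / 2 = -((z - 1) ^ 2 / 2) := by ring
            rw [hexpr]
            nlinarith [sq_nonneg (z - 2), Real.exp_pos (-((z - 1) ^ 2 / 2)),
              Real.exp_le_one_iff.mpr (show -((z - 1) ^ 2 / 2) ≤ 0 by nlinarith)]
          have h1 : a / s * Real.exp (-(z - 1) ^ 2 / 2) ≤ a / s := by
            have := div_nonneg ha hs0.le; nlinarith
          have h2 : b / s * z ^ 2 * Real.exp (-(z - 1) ^ 2 / 2) ≤ 6 * b / s := by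
            have hb' : 0 ≤ b / s := div_nonneg hb hs0.le
            calc b / s * z ^ 2 * Real.exp (-(z - 1) ^ 2 / 2)
                = b / s * (z ^ 2 * Real.exp (-(z - 1) ^ 2 / 2)) := by ring
              _ ≤ b / s * 6 := by exact mul_le_mul_of_nonneg_left hz2 hb'
              _ = 6 * b / s := by ring
          have : (a + 8 * b) / s = a / s + 8 * b / s := by ring
          rw [this]
          have h3 : 6 * b / s ≤ 8 * b / s := by
            gcongr; linarith
          linarith
  rcases le_or_gt (-1) z with hzm | hzm
  · -- -1 ≤ z < 1
    have hbound : ∀ t ∈ Set.Ioc x y, Real.exp (-t ^ 2 / 2) ≤ 1 := by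
      intro t _
      apply Real.exp_le_one_iff.mpr; nlinarith [sq_nonneg t]
    calc (∫ t in Set.Ioc x y, Real.exp (-t ^ 2 / 2) / Real.sqrt (2 * Real.pi))
        ≤ (y - x) * 1 := integral_bound x y 1 hxy hbound
      _ ≤ (a + 8 * b) / s := by
          rw [mul_one, hyx]
          have hzz : z ^ 2 ≤ 1 := by
            have h4 : (0:ℝ) ≤ (1 - z) * (1 + z) :=
              mul_nonneg (by linarith) (by linarith)
            nlinarith [h4]
          have hb' : 0 ≤ b / s := div_nonneg hb hs0.le
          have hA : (b / s) * z ^ 2 ≤ b / s := by nlinarith [hb', hzz, sq_nonneg z]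
          have hB : (a + 8 * b) / s = a / s + 8 * (b / s) := by ring
          rw [hB]
          linarith
  · -- z < -1, so b > 0
    have hbpos : 0 < b := by
      rcases lt_or_eq_of_le hb with h | h
      · exact h
      · exfalso; rw [← h] at hz; simp at hz; linarith
    have hzs : -s / (2 * b) ≤ z := by
      simpa using hz
    have hy2 : y ≤ z / 2 := by
      have h2b : (0:ℝ) < 2 * b := by linarith
      have h1 : -s ≤ 2 * b * z := by
        rw [div_le_iff₀ h2b] at hzs; linarith
      -- (b/s) z^2 ≤ -z/2
      have h2 : (b / s) * z ^ 2 ≤ -z / 2 := by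
        rw [div_mul_eq_mul_div, div_le_div_iff₀ hs0 two_pos]
        nlinarith
      simp only [hy_def]; linarith
    have hbound : ∀ t ∈ Set.Ioc x y, Real.exp (-t ^ 2 / 2) ≤ Real.exp (-(z ^ 2 / 8)) := by
      intro t ht
      have ht2 : t ≤ z / 2 := le_trans ht.2 hy2
      have hz0 : z / 2 < 0 := by linarith
      have : z ^ 2 / 4 ≤ t ^ 2 := by nlinarith
      apply Real.exp_le_exp.mpr; linarith
    calc (∫ t in Set.Ioc x y, Real.exp (-t ^ 2 / 2) / Real.sqrt (2 * Real.pi))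
        ≤ (y - x) * Real.exp (-(z ^ 2 / 8)) := integral_bound x y _ hxy hbound
      _ ≤ (a + 8 * b) / s := by
          rw [hyx, add_mul]
          have he1 : Real.exp (-(z ^ 2 / 8)) ≤ 1 :=
            Real.exp_le_one_iff.mpr (by nlinarith)
          have he0 : 0 < Real.exp (-(z ^ 2 / 8)) := Real.exp_pos _
          have hk : z ^ 2 / 8 * Real.exp (-(z ^ 2 / 8)) ≤ 1 := key_exp _
          have hz2 : z ^ 2 * Real.exp (-(z ^ 2 / 8)) ≤ 8 := by nlinarith
          have h1 : a / s * Real.exp (-(z ^ 2 / 8)) ≤ a / s := by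
            have := div_nonneg ha hs0.le; nlinarith
          have h2 : b / s * z ^ 2 * Real.exp (-(z ^ 2 / 8)) ≤ 8 * b / s := by
            have hb' : 0 ≤ b / s := div_nonneg hb hs0.le
            calc b / s * z ^ 2 * Real.exp (-(z ^ 2 / 8))
                = b / s * (z ^ 2 * Real.exp (-(z ^ 2 / 8))) := by ring
              _ ≤ b / s * 8 := mul_le_mul_of_nonneg_left hz2 hb'
              _ = 8 * b / s := by ring
          have : (a + 8 * b) / s = a / s + 8 * b / s := by ring
          linarith
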